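/- Let (u_n) be an arithmetic sequence, x ∈ 𝕋 with canonical digits supported on a set {k_i + 1 : i ∈ ℕ} (so x = ∑_i c_{k_i+1}/u_{k_i+1} with 0 ≤ c_{k_i+1} < q_{k_i+1}), and let j be an integer with k_{i−1} < j ≤ k_i. Then the fractional part of u_j·x is at most u_j/u_{k_i}, and hence |sin(π u_j x)| ≤ π u_j / u_{k_i}. -/

import Mathlib

/-- Tail estimate: let `u` be an arithmetic sequence (`u 0 = 1`, strictly
increasing, `u n ∣ u (n+1)`, ratios `q n = u n / u (n-1)`), `k` a strictly
increasing sequence of indices, and `x = ∑_i c (k i + 1) / u (k i + 1)` with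
canonical digits supported on `{k i + 1 : i}` (so `0 ≤ c (k i + 1) < q (k i + 1)`).
If `1 ≤ i` and `k (i-1) < j ≤ k i`, then the fractional part of `u j * x` is at
most `u j / u (k i)`, and hence `|sin (π u j x)| ≤ π u j / u (k i)`. -/
theorem fract_and_sin_tail_estimate
    (u : ℕ → ℕ) (hu0 : u 0 = 1) (humono : StrictMono u)
    (hudvd : ∀ n, u n ∣ u (n + 1))
    (k : ℕ → ℕ) (hkmono : StrictMono k)
    (c : ℕ → ℕ)
    (hcsupp : ∀ n, c n ≠ 0 → ∃ i, n = k i + 1)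
    (hcdigit : ∀ n, 1 ≤ n → c n < u n / u (n - 1))
    (x : ℝ) (hx : x = ∑' n : ℕ, (c n : ℝ) / u n)
    (i j : ℕ) (hi : 1 ≤ i) (hj1 : k (i - 1) < j) (hj2 : j ≤ k i) :
    Int.fract ((u j : ℝ) * x) ≤ (u j : ℝ) / u (k i) ∧
      |Real.sin (Real.pi * u j * x)| ≤ Real.pi * u j / u (k i) := by
  set f : ℕ → ℝ := fun n => (c n : ℝ) / u n with hf
  -- positivity of u
  have hup : ∀ n, 0 < u n := by
    intro n
    have := humono.monotone (Nat.zero_le n)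
    omega
  have hupR : ∀ n, (0:ℝ) < u n := fun n => by exact_mod_cast hup n
  -- divisibility along ≤
  have hdvdle : ∀ a b : ℕ, a ≤ b → u a ∣ u b := by
    intro a b h
    induction h with
    | refl => exact dvd_rfl
    | step _ ih => exact ih.trans (hudvd _)
  -- key digit inequality
  have hkey : ∀ n : ℕ, (c (n+1) + 1) * u n ≤ u (n+1) := by
    intro n
    have h1 : c (n+1) + 1 ≤ u (n+1) / u n := by
      have := hcdigit (n+1) (by omega)
      simpa using this
    calc (c (n+1) + 1) * u n ≤ (u (n+1) / u n) * u n :=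
          Nat.mul_le_mul_right _ h1
      _ = u (n+1) := Nat.div_mul_cancel (hudvd n)
  have hfle : ∀ n : ℕ, f (n+1) ≤ 1 / u n - 1 / u (n+1) := by
    intro n
    have key : ((c (n+1) : ℝ) + 1) * u n ≤ u (n+1) := by exact_mod_cast hkey n
    have ha := hupR n
    have hb := hupR (n+1)
    have hrw : (1/(u n:ℝ) - 1/(u (n+1):ℝ)) = ((u (n+1):ℝ) - u n)/(u n * u (n+1)) := by
      field_simp
    rw [hf]
    simp only
    rw [hrw, div_le_div_iff₀ hb (by positivity)]
    nlinarith [mul_le_mul_of_nonneg_right key hb.le]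
  have hfnonneg : ∀ n, 0 ≤ f n := by
    intro n
    rw [hf]
    positivity
  -- geometric growth
  have hpow : ∀ n : ℕ, 2 ^ n ≤ u n := by
    intro n
    induction n with
    | zero => omega
    | succ n ih =>
        have h2 : 2 * u n ≤ u (n+1) := by
          obtain ⟨m, hm⟩ := hudvd n
          have hlt := humono (Nat.lt_succ_self n)
          have hpos := hup n
          have hm2 : 2 ≤ m := by nlinarith
          calc 2 * u n ≤ u n * m := by nlinarith
            _ = u (n+1) := hm.symm
        calc 2 ^ (n+1) = 2 * 2 ^ n := by ring
          _ ≤ 2 * u n := by omega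
          _ ≤ u (n+1) := h2
  have hc0 : c 0 = 0 := by
    by_contra h
    obtain ⟨t, ht⟩ := hcsupp 0 h
    omega
  -- summability
  have hbound : ∀ n : ℕ, f n ≤ 2 * (1/2:ℝ)^n := by
    intro n
    rcases n with _ | n
    · have h0 : f 0 = 0 := by rw [hf]; simp [hc0]
      rw [h0]; norm_num
    · have h1 : f (n+1) ≤ 1 / u n - 1 / u (n+1) := hfle n
      have h2 : 1 / (u n : ℝ) - 1 / u (n+1) ≤ 1 / u n := by
        have := (hupR (n+1)).le
        have : (0:ℝ) ≤ 1 / u (n+1) := by positivity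
        linarith
      have h3 : 1 / (u n : ℝ) ≤ 1 / 2 ^ n := by
        apply one_div_le_one_div_of_le (by positivity)
        exact_mod_cast hpow n
      have h4 : (1:ℝ) / 2 ^ n = 2 * (1/2)^(n+1) := by
        rw [pow_succ]
        field_simp
        rw [← mul_pow]; norm_num
      linarith
  have hsumm : Summable f :=
    Summable.of_nonneg_of_le hfnonneg hbound (summable_geometric_two.mul_left 2)
  -- tail bound
  have htail : ∀ K : ℕ, ∑' m : ℕ, f (m + (K+1)) ≤ 1 / u K := by
    intro K
    have hs : Summable (fun m => f (m + (K+1))) := (summable_nat_add_iff (K+1)).2 hsumm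
    apply Summable.tsum_le_of_sum_le hs
    intro s
    obtain ⟨N, hN⟩ := s.exists_nat_subset_range
    calc ∑ m ∈ s, f (m+(K+1))
        ≤ ∑ m ∈ Finset.range N, f (m+(K+1)) :=
          Finset.sum_le_sum_of_subset_of_nonneg hN (fun _ _ _ => hfnonneg _)
      _ ≤ ∑ m ∈ Finset.range N, (1/(u (K+m):ℝ) - 1/u (K+m+1)) := by
          apply Finset.sum_le_sum
          intro m _
          have hidx : m + (K+1) = (K+m)+1 := by omega
          rw [hidx]
          exact hfle (K+m)
      _ = 1/(u (K+0):ℝ) - 1/u (K+N) :=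
          Finset.sum_range_sub' (fun m => 1/(u (K+m):ℝ)) N
      _ ≤ 1 / u K := by
          have : (0:ℝ) ≤ 1 / u (K+N) := by positivity
          simp only [Nat.add_zero]
          linarith
  -- zero digits in the middle range
  have hmid : ∀ n, j < n → n ≤ k i → c n = 0 := by
    intro n h1 h2
    by_contra h
    obtain ⟨t, ht⟩ := hcsupp n h
    have h3 : j ≤ k t := by omega
    have h4 : i ≤ t := by
      by_contra h4
      push_neg at h4
      have : t ≤ i - 1 := by omega
      have := hkmono.monotone this
      omega
    have h5 : k i ≤ k t := hkmono.monotone h4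
    omega
  -- the tail starting at j+1
  set T0 : ℝ := ∑' m : ℕ, f (m + (j+1)) with hT0def
  have hg : Summable (fun m => f (m + (j+1))) := (summable_nat_add_iff (j+1)).2 hsumm
  have hT0le : T0 ≤ 1 / u (k i) := by
    set d : ℕ := k i - j with hd
    have hsplit := (Summable.sum_add_tsum_nat_add (f := fun m => f (m + (j+1))) d hg).symm
    have hmid0 : ∑ m ∈ Finset.range d, f (m + (j+1)) = 0 := by
      apply Finset.sum_eq_zero
      intro m hm
      have hm' : m < d := Finset.mem_range.1 hm
      have hc : c (m + (j+1)) = 0 := hmid _ (by omega) (by omega)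
      simp [hf, hc]
    have hshift : (fun m => f (m + d + (j+1))) = fun m => f (m + (k i + 1)) := by
      funext m
      congr 1
      omega
    rw [hT0def, hsplit, hmid0, zero_add, hshift]
    exact htail (k i)
  have hT0nn : (0:ℝ) ≤ T0 := tsum_nonneg (fun m => hfnonneg _)
  -- the integer head
  have hintS : ∃ M : ℤ, ∑ n ∈ Finset.range (j+1), (u j : ℝ) * f n = M := by
    refine ⟨(∑ n ∈ Finset.range (j+1), (u j / u n * c n : ℕ) : ℤ), ?_⟩
    rw [Int.cast_sum]
    apply Finset.sum_congr rfl
    intro n hn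
    have hnj : n ≤ j := by
      have := Finset.mem_range.1 hn
      omega
    have hd : u n ∣ u j := hdvdle n j hnj
    rw [Int.cast_natCast, Nat.cast_mul,
      Nat.cast_div hd (Nat.cast_ne_zero.2 (hup n).ne'), hf]
    ring
  obtain ⟨M, hM⟩ := hintS
  -- main decomposition
  have hxval : (u j : ℝ) * x = (M : ℝ) + (u j : ℝ) * T0 := by
    have hsplit1 := Summable.sum_add_tsum_nat_add (f := f) (j+1) hsumm
    rw [hx, ← hsplit1, mul_add, Finset.mul_sum, hM, hT0def]
  have hTnn : (0:ℝ) ≤ (u j : ℝ) * T0 := by positivity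
  have hTle : (u j : ℝ) * T0 ≤ (u j : ℝ) / u (k i) := by
    calc (u j : ℝ) * T0 ≤ (u j : ℝ) * (1 / u (k i)) :=
          mul_le_mul_of_nonneg_left hT0le (by positivity)
      _ = (u j : ℝ) / u (k i) := by ring
  constructor
  · rw [hxval, Int.fract_intCast_add]
    have hfr : Int.fract ((u j:ℝ)*T0) ≤ (u j:ℝ)*T0 := by
      rw [Int.fract]
      have h0 : (0:ℝ) ≤ (⌊(u j:ℝ)*T0⌋ : ℝ) := by exact_mod_cast Int.floor_nonneg.mpr hTnn
      linarith
    exact hfr.trans hTle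
  · have harg : Real.pi * u j * x = Real.pi * ((u j:ℝ)*T0) + (M:ℝ) * Real.pi := by
      rw [mul_assoc, hxval]; ring
    rw [harg, Real.sin_add_int_mul_pi, abs_mul]
    have h1 : |(-1:ℝ)^M| = 1 := by
      rcases Int.even_or_odd M with h | h
      · rw [h.neg_one_zpow]; norm_num
      · rw [h.neg_one_zpow]; norm_num
    rw [h1, one_mul]
    calc |Real.sin (Real.pi * ((u j:ℝ)*T0))| ≤ |Real.pi * ((u j:ℝ)*T0)| :=
          Real.abs_sin_le_abs
      _ = Real.pi * ((u j:ℝ)*T0) := abs_of_nonneg (by positivity)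
      _ ≤ Real.pi * ((u j:ℝ) / u (k i)) :=
          mul_le_mul_of_nonneg_left hTle Real.pi_pos.le
      _ = Real.pi * u j / u (k i) := by ring
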